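/- Let k ≥ 2, let α and β be finite sets, and let G ≤ S_α and H ≤ S_β be subgroups. Then the Galois closure over k of the direct product G × H (as a subgroup of S_{α⊕β}) equals the direct product of the Galois closure of G over k and the Galois closure of H over k. -/

import Mathlib

/-- `σ ⊢ f`: the permutation `σ` leaves the function `f : ({1,…,k}^Ω) → {1,…,k}` invariant. -/
def InvariantUnder {Ω : Type*} (k : ℕ) (σ : Equiv.Perm Ω) (f : (Ω → Fin k) → Fin k) : Prop :=
  ∀ x : Ω → Fin k, f x = f (fun i => x (σ i))

/-- The Galois closure over `k` of a subgroup `G` of the symmetric group on `Ω`. -/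
def galoisClosure {Ω : Type*} (k : ℕ) (G : Subgroup (Equiv.Perm Ω)) : Set (Equiv.Perm Ω) :=
  {σ | ∀ f : (Ω → Fin k) → Fin k, (∀ π ∈ G, InvariantUnder k π f) → InvariantUnder k σ f}

/-- `G` is Galois closed over `k`. -/
def IsGaloisClosed {Ω : Type*} (k : ℕ) (G : Subgroup (Equiv.Perm Ω)) : Prop :=
  galoisClosure k G = (G : Set (Equiv.Perm Ω))

/-- The direct product of `G ≤ S_α` and `H ≤ S_β`, as a subgroup of `S_{α⊕β}`. -/
def prodPermSubgroup {α β : Type*} (G : Subgroup (Equiv.Perm α)) (H : Subgroup (Equiv.Perm β)) :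
    Subgroup (Equiv.Perm (α ⊕ β)) :=
  (G.prod H).map (Equiv.Perm.sumCongrHom α β)

lemma mul_mem_galoisClosure {Ω : Type*} {k : ℕ} {G : Subgroup (Equiv.Perm Ω)}
    {σ τ : Equiv.Perm Ω} (hσ : σ ∈ galoisClosure k G) (hτ : τ ∈ galoisClosure k G) :
    σ * τ ∈ galoisClosure k G := by
  intro f hf x
  have h1 := hσ f hf x
  have h2 := hτ f hf (fun i => x (σ i))
  simp only [Equiv.Perm.mul_apply]
  exact h1.trans h2

lemma sumCongr_left_mem {α β : Type*} [Fintype α] [Fintype β] {k : ℕ}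
    {G : Subgroup (Equiv.Perm α)} {H : Subgroup (Equiv.Perm β)} {g : Equiv.Perm α}
    (hg : g ∈ galoisClosure k G) :
    Equiv.sumCongr g (1 : Equiv.Perm β) ∈ galoisClosure k (prodPermSubgroup G H) := by
  intro f hf x
  set v : β → Fin k := fun b => x (Sum.inr b) with hv
  set f₁ : (α → Fin k) → Fin k := fun u => f (Sum.elim u v) with hf₁
  have hinv : ∀ π ∈ G, InvariantUnder k π f₁ := by
    intro π hπ u
    have hmem : Equiv.sumCongr π (1 : Equiv.Perm β) ∈ prodPermSubgroup G H :=
      ⟨(π, 1), ⟨hπ, H.one_mem⟩, rfl⟩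
    have := hf _ hmem (Sum.elim u v)
    simp only [hf₁]
    convert this using 2
    funext i
    cases i <;> rfl
  have key := hg f₁ hinv (fun a => x (Sum.inl a))
  have hx : x = Sum.elim (fun a => x (Sum.inl a)) v := by
    funext i; cases i <;> rfl
  calc f x = f₁ (fun a => x (Sum.inl a)) := by rw [hf₁]; exact congrArg f hx
    _ = f₁ (fun a => x (Sum.inl (g a))) := key
    _ = f (fun i => x (Equiv.sumCongr g (1 : Equiv.Perm β) i)) := by
        simp only [hf₁]
        congr 1
        funext i
        cases i <;> rfl

lemma sumCongr_right_mem {α β : Type*} [Fintype α] [Fintype β] {k : ℕ}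
    {G : Subgroup (Equiv.Perm α)} {H : Subgroup (Equiv.Perm β)} {h : Equiv.Perm β}
    (hh : h ∈ galoisClosure k H) :
    Equiv.sumCongr (1 : Equiv.Perm α) h ∈ galoisClosure k (prodPermSubgroup G H) := by
  intro f hf x
  set v : α → Fin k := fun a => x (Sum.inl a) with hv
  set f₁ : (β → Fin k) → Fin k := fun u => f (Sum.elim v u) with hf₁
  have hinv : ∀ ρ ∈ H, InvariantUnder k ρ f₁ := by
    intro ρ hρ u
    have hmem : Equiv.sumCongr (1 : Equiv.Perm α) ρ ∈ prodPermSubgroup G H :=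
      ⟨(1, ρ), ⟨G.one_mem, hρ⟩, rfl⟩
    have := hf _ hmem (Sum.elim v u)
    simp only [hf₁]
    convert this using 2
    funext i
    cases i <;> rfl
  have key := hh f₁ hinv (fun b => x (Sum.inr b))
  have hx : x = Sum.elim v (fun b => x (Sum.inr b)) := by
    funext i; cases i <;> rfl
  calc f x = f₁ (fun b => x (Sum.inr b)) := by rw [hf₁]; exact congrArg f hx
    _ = f₁ (fun b => x (Sum.inr (h b))) := key
    _ = f (fun i => x (Equiv.sumCongr (1 : Equiv.Perm α) h i)) := by
        simp only [hf₁]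
        congr 1
        funext i
        cases i <;> rfl

/-- The Galois closure over `k` of the direct product `G × H ≤ S_{α⊕β}` is the direct product
of the Galois closures of `G` and of `H` over `k`. -/
theorem stmt_6 {α β : Type*} [Fintype α] [Fintype β] (k : ℕ) (hk : 2 ≤ k)
    (G : Subgroup (Equiv.Perm α)) (H : Subgroup (Equiv.Perm β)) :
    galoisClosure k (prodPermSubgroup G H) =
      {σ : Equiv.Perm (α ⊕ β) | ∃ g ∈ galoisClosure k G, ∃ h ∈ galoisClosure k H,
        σ = Equiv.sumCongr g h} := by
  classical
  have hk0 : 0 < k := by omega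
  have h10 : (⟨1, by omega⟩ : Fin k) ≠ ⟨0, hk0⟩ := by
    intro hcon
    simpa using congrArg Fin.val hcon
  ext σ
  constructor
  · intro hσ
    -- First show σ maps inl-range into itself, using an indicator function.
    set c : α ⊕ β → Fin k := Sum.elim (fun _ => ⟨1, by omega⟩) (fun _ => ⟨0, hk0⟩) with hc
    set f : ((α ⊕ β) → Fin k) → Fin k :=
      fun x => if x = c then ⟨1, by omega⟩ else ⟨0, hk0⟩ with hfdef
    have hfinv : ∀ π ∈ prodPermSubgroup G H, InvariantUnder k π f := by
      rintro _ ⟨⟨π, ρ⟩, _, rfl⟩ x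
      simp only [hfdef]
      have hiff : (fun i => x (Equiv.Perm.sumCongrHom α β (π, ρ) i)) = c ↔ x = c := by
        constructor
        · intro hxc
          funext i
          have := congrFun hxc ((Equiv.Perm.sumCongrHom α β (π, ρ))⁻¹ i)
          simp only [← Equiv.Perm.mul_apply, mul_inv_cancel, Equiv.Perm.one_apply] at this
          rw [this]
          simp only [hc, Equiv.Perm.sumCongrHom_apply]
          generalize ((Equiv.sumCongr π⁻¹ ρ⁻¹ : Equiv.Perm (α ⊕ β)) i) = j
          cases i <;> cases j <;> simp_all [Equiv.Perm.sumCongrHom]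
        · intro hxc
          funext i
          rw [hxc]
          simp only [hc, Equiv.Perm.sumCongrHom_apply]
          cases i <;> rfl
      simp only [Equiv.Perm.sumCongrHom_apply, Equiv.sumCongr_apply] at hiff
      simp [hiff]
    have hinvf := hσ f hfinv c
    have hfc : f c = ⟨1, by omega⟩ := by simp [hfdef]
    have hcσ : (fun i => c (σ i)) = c := by
      by_contra hne
      rw [hfc, hfdef] at hinvf
      simp only [if_neg hne] at hinvf
      exact h10 hinvf
    have hmaps : Set.MapsTo σ (Set.range Sum.inl) (Set.range Sum.inl) := by
      rintro _ ⟨a, rfl⟩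
      have := congrFun hcσ (Sum.inl a)
      rcases hσa : σ (Sum.inl a) with a' | b'
      · exact ⟨a', rfl⟩
      · rw [hσa] at this
        simp only [hc, Sum.elim_inl, Sum.elim_inr] at this
        exact absurd this.symm h10
    obtain ⟨⟨g, h⟩, hgh⟩ := Equiv.Perm.mem_sumCongrHom_range_of_perm_mapsTo_inl hmaps
    have hσeq : σ = Equiv.sumCongr g h := hgh.symm
    refine ⟨g, ?_, h, ?_, hσeq⟩
    · -- g is in the closure of G
      intro f₀ hf₀ u
      set F : ((α ⊕ β) → Fin k) → Fin k := fun x => f₀ (fun a => x (Sum.inl a)) with hF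
      have hFinv : ∀ π ∈ prodPermSubgroup G H, InvariantUnder k π F := by
        rintro _ ⟨⟨π, ρ⟩, ⟨hπ, _⟩, rfl⟩ x
        simp only [hF]
        exact hf₀ π hπ (fun a => x (Sum.inl a))
      have key := hσ F hFinv (Sum.elim u (fun _ => ⟨0, hk0⟩))
      rw [hσeq] at key
      simpa [hF] using key
    · intro f₀ hf₀ u
      set F : ((α ⊕ β) → Fin k) → Fin k := fun x => f₀ (fun b => x (Sum.inr b)) with hF
      have hFinv : ∀ π ∈ prodPermSubgroup G H, InvariantUnder k π F := by
        rintro _ ⟨⟨π, ρ⟩, ⟨_, hρ⟩, rfl⟩ x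
        simp only [hF]
        exact hf₀ ρ hρ (fun b => x (Sum.inr b))
      have key := hσ F hFinv (Sum.elim (fun _ => ⟨0, hk0⟩) u)
      rw [hσeq] at key
      simpa [hF] using key
  · rintro ⟨g, hg, h, hh, rfl⟩
    have : Equiv.sumCongr g h =
        (Equiv.sumCongr g (1 : Equiv.Perm β)) * (Equiv.sumCongr (1 : Equiv.Perm α) h) := by
      ext i
      cases i <;> rfl
    rw [this]
    exact mul_mem_galoisClosure (sumCongr_left_mem hg) (sumCongr_right_mem hh)
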